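/- Let p ∈ ℕ*, a₁,…,a_p ∈ ℝ and λ > 0 with max(a₁,0) + ⋯ + max(a_p,0) < 1. Set η := 1 − max(a₁,0) − ⋯ − max(a_p,0), and for 1 ≤ i ≤ p set αᵢ := η(p−i+1)/p + Σ_{j=i}^p max(a_j,0), so α₁ = 1 and each αᵢ > 0. Define V : ℕ^p → [1,∞) by V(x₁,…,x_p) := α₁x₁ + ⋯ + α_p x_p + 1. Then there exist ε ∈ (0,1], K < ∞ and a finite set C ⊂ ℕ^p such that for every x = (x₁,…,x_p) ∈ ℕ^p, Σ_{ℓ∈ℕ} (e^{−s_x} s_x^ℓ / ℓ!) · V(ℓ, x₁,…,x_{p−1}) − V(x) ≤ −ε·V(x) + K·1_C(x). -/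

import Mathlib

open scoped BigOperators
open Classical

/-- The Poisson probability mass function with parameter `s` at `k`. -/
noncomputable def poissonPMF (s : ℝ) (k : ℕ) : ℝ :=
  Real.exp (-s) * s ^ k / (Nat.factorial k)

/-- The (truncated) intensity `s_x = max(a₁x₁ + ⋯ + a_p x_p + λ, 0)`. -/
noncomputable def hawkesS {p : ℕ} (a : Fin p → ℝ) (lam : ℝ) (x : Fin p → ℕ) : ℝ :=
  max (∑ i, a i * (x i : ℝ) + lam) 0

/-- One step of the chain: from state `x = (x₁,…,x_p)` and new value `ℓ`,
the next state is `(ℓ, x₁,…,x_{p−1})`. -/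
def shift {p : ℕ} (hp : 0 < p) (x : Fin p → ℕ) (ℓ : ℕ) : Fin p → ℕ :=
  fun i => if (i : ℕ) = 0 then ℓ
    else x ⟨(i : ℕ) - 1, Nat.lt_of_le_of_lt (Nat.sub_le _ _) i.isLt⟩

/-- `η := 1 − (a₁)₊ − ⋯ − (a_p)₊`. -/
noncomputable def etaCoef {p : ℕ} (a : Fin p → ℝ) : ℝ :=
  1 - ∑ j, max (a j) 0

/-- The coefficient `αᵢ := η (p−i+1)/p + Σ_{j=i}^p (a_j)₊` (here `i : Fin p` is
the `0`-indexed version of the `1`-indexed `i`, so `p − i + 1` becomes `p − i`). -/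
noncomputable def alphaCoef {p : ℕ} (a : Fin p → ℝ) (i : Fin p) : ℝ :=
  etaCoef a * ((p : ℝ) - (i : ℕ)) / p
    + ∑ j ∈ Finset.univ.filter (fun j => i ≤ j), max (a j) 0

/-- The Lyapunov function `V(x₁,…,x_p) := α₁x₁ + ⋯ + α_p x_p + 1`. -/
noncomputable def hawkesV {p : ℕ} (a : Fin p → ℝ) (x : Fin p → ℕ) : ℝ :=
  ∑ i, alphaCoef a i * (x i : ℝ) + 1

/- ### Auxiliary lemmas -/

lemma poisson_hasSum (s : ℝ) : HasSum (poissonPMF s) 1 := by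
  have h := (NormedSpace.expSeries_div_hasSum_exp s).mul_left (Real.exp (-s))
  rw [← Real.exp_eq_exp_ℝ, ← Real.exp_add, neg_add_cancel, Real.exp_zero] at h
  have he : poissonPMF s = fun i : ℕ => Real.exp (-s) * (s ^ i / i.factorial) :=
    funext fun i => mul_div_assoc _ _ _
  rw [he]; exact h

lemma poisson_succ (s : ℝ) (n : ℕ) :
    poissonPMF s (n + 1) * ((n : ℝ) + 1) = s * poissonPMF s n := by
  have hf : (Nat.factorial n : ℝ) ≠ 0 := Nat.cast_ne_zero.mpr n.factorial_ne_zero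
  have hne : (n : ℝ) + 1 ≠ 0 := by positivity
  simp only [poissonPMF, Nat.factorial_succ, pow_succ, Nat.cast_mul]
  field_simp
  push_cast
  ring

lemma poisson_mean_hasSum (s : ℝ) :
    HasSum (fun ℓ : ℕ => poissonPMF s ℓ * (ℓ : ℝ)) s := by
  have h := (poisson_hasSum s).mul_left s
  rw [mul_one] at h
  have h1 : HasSum (fun n : ℕ => poissonPMF s (n + 1) * ((n + 1 : ℕ) : ℝ)) s := by
    have : (fun n : ℕ => poissonPMF s (n + 1) * ((n + 1 : ℕ) : ℝ))
        = fun n : ℕ => s * poissonPMF s n := by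
      funext n; push_cast; exact poisson_succ s n
    rw [this]; exact h
  have h2 := (hasSum_nat_add_iff (f := fun ℓ : ℕ => poissonPMF s ℓ * (ℓ : ℝ)) 1).mp h1
  simpa using h2

lemma alpha_zero {n : ℕ} (a : Fin (n+1) → ℝ) : alphaCoef a 0 = 1 := by
  unfold alphaCoef etaCoef
  have h1 : Finset.univ.filter (fun j : Fin (n+1) => (0 : Fin (n+1)) ≤ j)
      = Finset.univ := by
    simp [Fin.zero_le]
  rw [h1]
  have hp : ((n+1 : ℕ) : ℝ) ≠ 0 := by positivity
  push_cast at hp ⊢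
  field_simp
  simp only [Fin.val_zero, Nat.cast_zero]
  ring

lemma alpha_diff {n : ℕ} (a : Fin (n+1) → ℝ) (i : Fin n) :
    alphaCoef a i.castSucc - alphaCoef a i.succ
      = etaCoef a / ((n : ℝ) + 1) + max (a i.castSucc) 0 := by
  unfold alphaCoef
  have hset : (Finset.univ.filter (fun j : Fin (n+1) => i.castSucc ≤ j))
      = insert i.castSucc (Finset.univ.filter (fun j : Fin (n+1) => i.succ ≤ j)) := by
    ext j
    simp only [Finset.mem_filter, Finset.mem_univ, true_and, Finset.mem_insert,
      Fin.le_def, Fin.coe_castSucc, Fin.val_succ, Fin.ext_iff]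
    omega
  have hnot : i.castSucc ∉ Finset.univ.filter (fun j : Fin (n+1) => i.succ ≤ j) := by
    simp [Fin.le_def]
  rw [hset, Finset.sum_insert hnot]
  have hp : ((n : ℝ) + 1) ≠ 0 := by positivity
  simp only [Fin.coe_castSucc, Fin.val_succ]
  push_cast
  field_simp
  ring

lemma alpha_last {n : ℕ} (a : Fin (n+1) → ℝ) :
    alphaCoef a (Fin.last n) = etaCoef a / ((n : ℝ) + 1) + max (a (Fin.last n)) 0 := by
  unfold alphaCoef
  have hset : (Finset.univ.filter (fun j : Fin (n+1) => Fin.last n ≤ j))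
      = {Fin.last n} := by
    ext j
    have hj := j.isLt
    simp only [Finset.mem_filter, Finset.mem_univ, true_and, Finset.mem_singleton,
      Fin.le_def, Fin.val_last, Fin.ext_iff]
    omega
  rw [hset, Finset.sum_singleton, Fin.val_last]
  have hp : ((n : ℝ) + 1) ≠ 0 := by positivity
  push_cast
  field_simp
  ring

lemma alpha_le_one {n : ℕ} (a : Fin (n+1) → ℝ) (h : 0 ≤ etaCoef a) (i : Fin (n+1)) :
    alphaCoef a i ≤ 1 := by
  unfold alphaCoef
  have h1 : ∑ j ∈ Finset.univ.filter (fun j => i ≤ j), max (a j) 0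
      ≤ ∑ j, max (a j) 0 :=
    Finset.sum_le_sum_of_subset_of_nonneg (Finset.filter_subset _ _)
      (fun j _ _ => le_max_right _ _)
  have h2 : etaCoef a * (((n+1 : ℕ) : ℝ) - (i : ℕ)) / ((n+1 : ℕ) : ℝ) ≤ etaCoef a := by
    rw [div_le_iff₀ (by positivity)]
    have hi : (0:ℝ) ≤ ((i : ℕ) : ℝ) := Nat.cast_nonneg _
    nlinarith [h]
  have h3 : etaCoef a + ∑ j, max (a j) 0 = 1 := by unfold etaCoef; ring
  calc etaCoef a * (((n+1 : ℕ) : ℝ) - (i : ℕ)) / ((n+1 : ℕ) : ℝ)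
        + ∑ j ∈ Finset.univ.filter (fun j => i ≤ j), max (a j) 0
      ≤ etaCoef a + ∑ j, max (a j) 0 := add_le_add h2 h1
    _ = 1 := h3

theorem hawkes_drift_condition (p : ℕ) (hp : 0 < p) (a : Fin p → ℝ)
    (lam : ℝ) (hlam : 0 < lam)
    (hsum : ∑ i, max (a i) 0 < 1) :
    ∃ ε : ℝ, ε ∈ Set.Ioc (0 : ℝ) 1 ∧
      ∃ K : ℝ, ∃ C : Finset (Fin p → ℕ),
        ∀ x : Fin p → ℕ,
          (∑' ℓ : ℕ, poissonPMF (hawkesS a lam x) ℓ * hawkesV a (shift hp x ℓ))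
              - hawkesV a x
            ≤ -ε * hawkesV a x + K * (if x ∈ C then 1 else 0) := by
  obtain ⟨n, rfl⟩ : ∃ n, p = n + 1 := ⟨p - 1, (Nat.succ_pred_eq_of_pos hp).symm⟩
  have hη : 0 < etaCoef a := by unfold etaCoef; linarith
  have hηle : etaCoef a ≤ 1 := by
    have h0 : 0 ≤ ∑ j, max (a j) 0 :=
      Finset.sum_nonneg fun j _ => le_max_right _ _
    unfold etaCoef; linarith
  set η := etaCoef a with hηdef
  set ε : ℝ := η / (2 * ((n : ℝ) + 1)) with hεdef
  have hε : 0 < ε := by positivity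
  have hn1 : (0:ℝ) ≤ (n : ℝ) := Nat.cast_nonneg n
  have hε1 : ε ≤ 1 := by
    rw [hεdef, div_le_one (by positivity)]
    linarith
  have h2ε : η / ((n : ℝ) + 1) = 2 * ε := by
    rw [hεdef]; field_simp
  set M : ℕ := ⌈(lam + ε) / ε⌉₊ + 1 with hMdef
  refine ⟨ε, ⟨hε, hε1⟩, lam + ε,
    Fintype.piFinset (fun _ : Fin (n+1) => Finset.range M), ?_⟩
  intro x
  set s := hawkesS a lam x with hsdef
  set c : ℝ := ∑ i : Fin n, alphaCoef a i.succ * (x i.castSucc : ℝ) + 1 with hcdef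
  -- value of V after a shift
  have hshift : ∀ ℓ : ℕ, hawkesV a (shift hp x ℓ) = (ℓ : ℝ) + c := by
    intro ℓ
    unfold hawkesV
    rw [Fin.sum_univ_succ]
    have h0 : shift hp x ℓ 0 = ℓ := rfl
    have hs : ∀ i : Fin n, shift hp x ℓ i.succ = x i.castSucc := fun i => rfl
    simp only [h0, hs]
    rw [alpha_zero a, one_mul, hcdef]
    ring
  -- the tsum evaluates to s + c
  have htsum : (∑' ℓ : ℕ, poissonPMF s ℓ * hawkesV a (shift hp x ℓ)) = s + c := by
    have h1 := poisson_mean_hasSum s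
    have h2 := (poisson_hasSum s).mul_right c
    rw [one_mul] at h2
    have h3 := h1.add h2
    have he : (fun ℓ : ℕ => poissonPMF s ℓ * (ℓ : ℝ) + poissonPMF s ℓ * c)
        = fun ℓ : ℕ => poissonPMF s ℓ * hawkesV a (shift hp x ℓ) := by
      funext ℓ; rw [hshift ℓ]; ring
    rw [he] at h3
    exact h3.tsum_eq
  rw [htsum]
  -- the drift identity
  have hdrift : s + c - hawkesV a x
      = s - ∑ i : Fin (n+1), (η / ((n : ℝ) + 1) + max (a i) 0) * (x i : ℝ) := by
    unfold hawkesV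
    rw [Fin.sum_univ_castSucc (f := fun i : Fin (n+1) => alphaCoef a i * (x i : ℝ)),
      Fin.sum_univ_castSucc
        (f := fun i : Fin (n+1) => (η / ((n : ℝ) + 1) + max (a i) 0) * (x i : ℝ)),
      hcdef, alpha_last a]
    have hA : ∑ i : Fin n, (η / ((n : ℝ) + 1) + max (a i.castSucc) 0) * (x i.castSucc : ℝ)
        = (∑ i : Fin n, alphaCoef a i.castSucc * (x i.castSucc : ℝ))
          - ∑ i : Fin n, alphaCoef a i.succ * (x i.castSucc : ℝ) := by
      rw [← Finset.sum_sub_distrib]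
      refine Finset.sum_congr rfl fun i _ => ?_
      rw [← alpha_diff a i]; ring
    rw [hA]; ring
  rw [hdrift]
  -- bound on the intensity
  have hslb : s ≤ ∑ i, max (a i) 0 * (x i : ℝ) + lam := by
    rw [hsdef]
    unfold hawkesS
    apply max_le
    · have : ∑ i, a i * (x i : ℝ) ≤ ∑ i, max (a i) 0 * (x i : ℝ) :=
        Finset.sum_le_sum fun i _ =>
          mul_le_mul_of_nonneg_right (le_max_left _ _) (Nat.cast_nonneg _)
      linarith
    · have : (0:ℝ) ≤ ∑ i, max (a i) 0 * (x i : ℝ) :=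
        Finset.sum_nonneg fun i _ =>
          mul_nonneg (le_max_right _ _) (Nat.cast_nonneg _)
      linarith
  set N : ℝ := ∑ i, ((x i : ℝ)) with hNdef
  have hN : 0 ≤ N := Finset.sum_nonneg fun i _ => Nat.cast_nonneg _
  have hexp : ∑ i : Fin (n+1), (η / ((n : ℝ) + 1) + max (a i) 0) * (x i : ℝ)
      = 2 * ε * N + ∑ i, max (a i) 0 * (x i : ℝ) := by
    rw [hNdef, Finset.mul_sum, ← Finset.sum_add_distrib]
    refine Finset.sum_congr rfl fun i _ => ?_
    rw [h2ε]; ring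
  have hVle : hawkesV a x ≤ N + 1 := by
    unfold hawkesV
    have : ∑ i, alphaCoef a i * (x i : ℝ) ≤ ∑ i, (x i : ℝ) := by
      refine Finset.sum_le_sum fun i _ => ?_
      have := alpha_le_one a hη.le i
      nlinarith [show (0:ℝ) ≤ ((x i : ℕ) : ℝ) from Nat.cast_nonneg _]
    rw [hNdef]; linarith
  have hεV : ε * hawkesV a x ≤ ε * (N + 1) := mul_le_mul_of_nonneg_left hVle hε.le
  by_cases hx : x ∈ Fintype.piFinset (fun _ : Fin (n+1) => Finset.range M)
  · rw [if_pos hx]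
    have hεN : 0 ≤ ε * N := mul_nonneg hε.le hN
    nlinarith [hslb, hexp, hεV]
  · rw [if_neg hx]
    obtain ⟨i, hi⟩ : ∃ i, ¬ x i < M := by
      by_contra hcon
      push_neg at hcon
      exact hx (by simpa [Fintype.mem_piFinset, Finset.mem_range] using hcon)
    push_neg at hi
    have hxiN : ((x i : ℝ)) ≤ N := by
      rw [hNdef]
      exact Finset.single_le_sum (f := fun j => ((x j : ℕ) : ℝ)) (fun j _ => Nat.cast_nonneg _) (Finset.mem_univ i)
    have hMN : ((M : ℝ)) ≤ N := le_trans (Nat.cast_le.mpr hi) hxiN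
    have hceil : (lam + ε) / ε ≤ (M : ℝ) := by
      rw [hMdef]
      push_cast
      have := Nat.le_ceil ((lam + ε) / ε)
      linarith
    have hKN : lam + ε ≤ ε * N := by
      rw [← div_le_iff₀' hε]
      exact le_trans hceil hMN
    nlinarith [hslb, hexp, hεV]
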